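/- Let $n \ge 1$ and $0 < \lambda < n$. There exists a constant $C > 0$, depending only on $n$ and $\lambda$, such that the inequality $$\|Mf\|_{\mathcal{M}_{1,\lambda}} \;\le\; C\, \|f\|_{\mathcal{M}_{1,\lambda}}$$ holds for all radial, decreasing functions $f$ on $\mathbb{R}^n$, i.e. all $f$ with $f(x) = \varphi(|x|)$ for some nonnegative nonincreasing $\varphi$ on $(0,\infty)$. Here $Mf$ denotes the Hardy–Littlewood maximal function of $f$. -/

import Mathlib

open MeasureTheory Set
open scoped ENNReal NNReal

/-- The Hardy–Littlewood maximal function `Mf(x) = sup_{B ∋ x} |B|⁻¹ ∫_B |f|`,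
supremum over open balls containing `x`, valued in `ℝ≥0∞`. -/
noncomputable def maximalFn (n : ℕ) (f : EuclideanSpace ℝ (Fin n) → ℝ)
    (x : EuclideanSpace ℝ (Fin n)) : ℝ≥0∞ :=
  ⨆ (z : EuclideanSpace ℝ (Fin n)) (r : ℝ) (_ : 0 < r) (_ : x ∈ Metric.ball z r),
    (volume (Metric.ball z r))⁻¹ * ∫⁻ y in Metric.ball z r, ‖f y‖₊

/-- The Morrey "norm" `‖f‖_{M_{1,λ}} = sup_{x ∈ ℝⁿ, r > 0} r^{λ-n} ∫_{B(x,r)} |f|`. -/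
noncomputable def morreyNorm (n : ℕ) (lam : ℝ) (f : EuclideanSpace ℝ (Fin n) → ℝ) : ℝ≥0∞ :=
  ⨆ (x : EuclideanSpace ℝ (Fin n)) (r : ℝ) (_ : 0 < r),
    ENNReal.ofReal (r ^ (lam - (n:ℝ))) * ∫⁻ y in Metric.ball x r, ‖f y‖₊

/-- The Morrey "norm" of an `ℝ≥0∞`-valued function. -/
noncomputable def morreyNormE (n : ℕ) (lam : ℝ) (g : EuclideanSpace ℝ (Fin n) → ℝ≥0∞) : ℝ≥0∞ :=
  ⨆ (x : EuclideanSpace ℝ (Fin n)) (r : ℝ) (_ : 0 < r),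
    ENNReal.ofReal (r ^ (lam - (n:ℝ))) * ∫⁻ y in Metric.ball x r, g y

open Metric

lemma vol_ball {n : ℕ} (z : EuclideanSpace ℝ (Fin n)) {s : ℝ} (hs : 0 < s) :
    volume (Metric.ball z s)
      = ENNReal.ofReal (s ^ ((n:ℝ))) * volume (Metric.ball (0:EuclideanSpace ℝ (Fin n)) 1) := by
  rw [Measure.addHaar_ball_of_pos _ _ hs, finrank_euclideanSpace_fin, Real.rpow_natCast]

lemma aux_inv_mul {v A : ℝ≥0∞} (hv0 : v ≠ 0) (hvt : v ≠ ⊤) {a b : ℝ} (ha : 0 < a) (hb : 0 ≤ b) :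
    (ENNReal.ofReal a * v)⁻¹ * (ENNReal.ofReal b * A)
      = ENNReal.ofReal (a⁻¹ * v.toReal⁻¹ * b) * A := by
  have hvR : 0 < v.toReal := ENNReal.toReal_pos hv0 hvt
  have h2 : v⁻¹ = ENNReal.ofReal v.toReal⁻¹ := by
    rw [ENNReal.ofReal_inv_of_pos hvR, ENNReal.ofReal_toReal hvt]
  rw [ENNReal.mul_inv (Or.inl (ENNReal.ofReal_pos.2 ha).ne') (Or.inl ENNReal.ofReal_ne_top),
    ← ENNReal.ofReal_inv_of_pos ha, h2, ENNReal.ofReal_mul (by positivity),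
    ENNReal.ofReal_mul (by positivity)]
  ring

lemma morrey_ball_bound (n : ℕ) (lam : ℝ) (f : EuclideanSpace ℝ (Fin n) → ℝ)
    (x : EuclideanSpace ℝ (Fin n)) {r : ℝ} (hr : 0 < r) :
    ∫⁻ y in Metric.ball x r, ‖f y‖₊
      ≤ ENNReal.ofReal (r ^ ((n:ℝ) - lam)) * morreyNorm n lam f := by
  have h : ENNReal.ofReal (r ^ (lam - (n:ℝ))) * ∫⁻ y in Metric.ball x r, ‖f y‖₊
      ≤ morreyNorm n lam f := le_iSup_of_le x (le_iSup_of_le r (le_iSup_of_le hr le_rfl))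
  calc ∫⁻ y in Metric.ball x r, ‖f y‖₊
      = ENNReal.ofReal (r ^ ((n:ℝ) - lam)) *
        (ENNReal.ofReal (r ^ (lam - (n:ℝ))) * ∫⁻ y in Metric.ball x r, ‖f y‖₊) := by
        rw [← mul_assoc, ← ENNReal.ofReal_mul (by positivity), ← Real.rpow_add hr,
          show ((n:ℝ) - lam) + (lam - (n:ℝ)) = 0 by ring, Real.rpow_zero,
          ENNReal.ofReal_one, one_mul]
    _ ≤ _ := by gcongr

lemma maximal_ptwise (n : ℕ) (hn : 1 ≤ n) (lam : ℝ) (hlam0 : 0 < lam) (hlamn : lam < n)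
    (f : EuclideanSpace ℝ (Fin n) → ℝ) (φ : ℝ → ℝ)
    (hφ0 : ∀ ρ ∈ Set.Ioi (0:ℝ), 0 ≤ φ ρ) (hφa : AntitoneOn φ (Set.Ioi (0:ℝ)))
    (hf : ∀ x, f x = φ ‖x‖) {y : EuclideanSpace ℝ (Fin n)} (hy : y ≠ 0) :
    maximalFn n f y ≤
      ENNReal.ofReal ((24:ℝ) ^ ((n:ℝ)) *
          (volume (Metric.ball (0:EuclideanSpace ℝ (Fin n)) 1)).toReal⁻¹ * ‖y‖ ^ (-lam)) *
        morreyNorm n lam f := by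
  haveI : Nonempty (Fin n) := ⟨⟨0, hn⟩⟩
  set v : ℝ≥0∞ := volume (Metric.ball (0:EuclideanSpace ℝ (Fin n)) 1) with hv
  have hv0 : v ≠ 0 := (measure_ball_pos _ _ one_pos).ne'
  have hvt : v ≠ ⊤ := measure_ball_lt_top.ne
  have hvR : 0 < v.toReal := ENNReal.toReal_pos hv0 hvt
  have hny : 0 < ‖y‖ := norm_pos_iff.2 hy
  set A := morreyNorm n lam f with hA
  refine iSup_le fun z => iSup_le fun s => iSup_le fun hs => iSup_le fun hyz => ?_
  have hyz' : dist y z < s := mem_ball.mp hyz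
  by_cases hcase : ‖y‖ / 4 ≤ s
  · -- large ball case
    have hsub : Metric.ball z s ⊆ Metric.ball (0:EuclideanSpace ℝ (Fin n)) (6*s) := by
      intro w hw
      have h1 : dist w z < s := mem_ball.mp hw
      have h2 : dist w 0 ≤ dist w z + dist z y + dist y 0 := dist_triangle4 w z y 0
      have h3 : dist y 0 = ‖y‖ := dist_zero_right y
      have h4 : dist z y < s := by rw [dist_comm]; exact hyz'
      have h6 : ‖y‖ ≤ 4 * s := by linarith
      have h7 : dist w 0 < 6 * s := by linarith
      exact mem_ball.mpr h7
    have hint : ∫⁻ w in Metric.ball z s, ‖f w‖₊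
        ≤ ENNReal.ofReal ((6*s) ^ ((n:ℝ) - lam)) * A :=
      le_trans (lintegral_mono_set hsub) (morrey_ball_bound n lam f 0 (by linarith))
    calc (volume (Metric.ball z s))⁻¹ * ∫⁻ w in Metric.ball z s, ‖f w‖₊
        ≤ (ENNReal.ofReal (s ^ ((n:ℝ))) * v)⁻¹ *
            (ENNReal.ofReal ((6*s) ^ ((n:ℝ) - lam)) * A) := by
          rw [hv, ← vol_ball z hs]; exact mul_le_mul_right hint _
      _ = ENNReal.ofReal ((s ^ ((n:ℝ)))⁻¹ * v.toReal⁻¹ * (6*s) ^ ((n:ℝ) - lam)) * A :=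
          aux_inv_mul hv0 hvt (by positivity) (by positivity)
      _ ≤ ENNReal.ofReal ((24:ℝ) ^ ((n:ℝ)) * v.toReal⁻¹ * ‖y‖ ^ (-lam)) * A := by
          gcongr ENNReal.ofReal ?_ * A
          have hs6 : ((6*s:ℝ)) ^ ((n:ℝ) - lam) = 6 ^ ((n:ℝ)-lam) * s ^ ((n:ℝ)-lam) :=
            Real.mul_rpow (by norm_num) hs.le
          have hsn : ((s:ℝ) ^ ((n:ℝ)))⁻¹ = s ^ (-(n:ℝ)) := (Real.rpow_neg hs.le _).symm
          have hss : s ^ (-(n:ℝ)) * s ^ ((n:ℝ)-lam) = s ^ (-lam) := by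
            rw [← Real.rpow_add hs, show -(n:ℝ)+((n:ℝ)-lam) = -lam by ring]
          have e0 : (s ^ ((n:ℝ)))⁻¹ * v.toReal⁻¹ * (6*s) ^ ((n:ℝ) - lam)
              = v.toReal⁻¹ * ((6:ℝ) ^ ((n:ℝ) - lam) * s ^ (-lam)) := by
            rw [hs6, hsn, ← hss]; ring
          rw [e0]
          have e1 : s ^ (-lam) ≤ (4:ℝ) ^ ((n:ℝ)) * ‖y‖ ^ (-lam) := by
            have h5 : (‖y‖/4) ^ (-lam) ≤ (4:ℝ) ^ ((n:ℝ)) * ‖y‖ ^ (-lam) := by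
              rw [Real.div_rpow hny.le (by norm_num), Real.rpow_neg (by norm_num : (0:ℝ) ≤ 4),
                div_eq_mul_inv, inv_inv, mul_comm]
              have h8 : (4:ℝ) ^ lam ≤ (4:ℝ) ^ ((n:ℝ)) :=
                Real.rpow_le_rpow_of_exponent_le (by norm_num) (by linarith)
              have h9 : (0:ℝ) ≤ ‖y‖ ^ (-lam) := by positivity
              exact mul_le_mul_of_nonneg_right h8 h9
            exact le_trans (Real.rpow_le_rpow_of_nonpos (by positivity) hcase
              (neg_nonpos.2 hlam0.le)) h5
          have e2 : (6:ℝ) ^ ((n:ℝ) - lam) ≤ (6:ℝ) ^ ((n:ℝ)) :=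
            Real.rpow_le_rpow_of_exponent_le (by norm_num) (by linarith)
          calc v.toReal⁻¹ * ((6:ℝ) ^ ((n:ℝ) - lam) * s ^ (-lam))
              ≤ v.toReal⁻¹ * ((6:ℝ) ^ ((n:ℝ)) * ((4:ℝ) ^ ((n:ℝ)) * ‖y‖ ^ (-lam))) := by
                have h6a : (6:ℝ) ^ ((n:ℝ) - lam) * s ^ (-lam)
                    ≤ (6:ℝ) ^ ((n:ℝ)) * ((4:ℝ) ^ ((n:ℝ)) * ‖y‖ ^ (-lam)) := by
                  have := mul_le_mul e2 e1 (by positivity) (by positivity)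
                  linarith
                exact mul_le_mul_of_nonneg_left h6a (by positivity)
            _ = (24:ℝ) ^ ((n:ℝ)) * v.toReal⁻¹ * ‖y‖ ^ (-lam) := by
                rw [show (24:ℝ) = 6 * 4 by norm_num,
                  Real.mul_rpow (by norm_num) (by norm_num)]
                ring
  · -- small ball case
    push_neg at hcase
    set R := ‖y‖ / 2 with hR
    have hR0 : 0 < R := by positivity
    have hball0 : volume (Metric.ball z s) ≠ 0 := (measure_ball_pos _ _ hs).ne'
    have hballt : volume (Metric.ball z s) ≠ ⊤ := measure_ball_lt_top.ne
    have hAa : ∫⁻ w in Metric.ball z s, ‖f w‖₊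
        ≤ ENNReal.ofReal (φ R) * volume (Metric.ball z s) := by
      rw [← setLIntegral_const]
      refine lintegral_mono_ae (ae_restrict_of_forall_mem measurableSet_ball fun w hw => ?_)
      have h1 : dist w z < s := mem_ball.mp hw
      have h2 : dist y w < 2 * s := by
        have h2a := dist_triangle y z w
        rw [dist_comm z w] at h2a
        linarith
      have h3 : ‖y‖ - ‖w‖ ≤ dist y w := by
        have := abs_norm_sub_norm_le y w
        rw [← dist_eq_norm] at this
        exact (abs_le.1 this).2
      have hRw : R < ‖w‖ := by
        rw [hR]; linarith
      rw [hf w, ← enorm_eq_nnnorm, Real.enorm_eq_ofReal (hφ0 _ (mem_Ioi.2 (hR0.trans hRw)))]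
      exact ENNReal.ofReal_le_ofReal (hφa (mem_Ioi.2 hR0) (mem_Ioi.2 (hR0.trans hRw)) hRw.le)
    have hT : (volume (Metric.ball z s))⁻¹ * ∫⁻ w in Metric.ball z s, ‖f w‖₊
        ≤ ENNReal.ofReal (φ R) := by
      calc (volume (Metric.ball z s))⁻¹ * ∫⁻ w in Metric.ball z s, ‖f w‖₊
          ≤ (volume (Metric.ball z s))⁻¹ * (ENNReal.ofReal (φ R) * volume (Metric.ball z s)) :=
            mul_le_mul_right hAa _
        _ = ENNReal.ofReal (φ R) := by
            rw [mul_comm (ENNReal.ofReal (φ R)) _, ← mul_assoc,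
              ENNReal.inv_mul_cancel hball0 hballt, one_mul]
    have h0ae : ∀ᵐ (w : EuclideanSpace ℝ (Fin n)) ∂(volume : Measure (EuclideanSpace ℝ (Fin n))),
        w ≠ 0 := by
      refine ae_iff.2 ?_
      simp only [not_not, Set.setOf_eq_eq_singleton]
      exact measure_singleton 0
    have hB : ENNReal.ofReal (φ R) * volume (Metric.ball (0:EuclideanSpace ℝ (Fin n)) R)
        ≤ ENNReal.ofReal (R ^ ((n:ℝ) - lam)) * A := by
      calc ENNReal.ofReal (φ R) * volume (Metric.ball (0:EuclideanSpace ℝ (Fin n)) R)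
          = ∫⁻ _ in Metric.ball (0:EuclideanSpace ℝ (Fin n)) R, ENNReal.ofReal (φ R) :=
            (setLIntegral_const _ _).symm
        _ ≤ ∫⁻ w in Metric.ball (0:EuclideanSpace ℝ (Fin n)) R, ‖f w‖₊ := by
            refine lintegral_mono_ae ?_
            filter_upwards [ae_restrict_mem measurableSet_ball, ae_restrict_of_ae h0ae]
              with w hw hw0
            have hw' : 0 < ‖w‖ := norm_pos_iff.2 hw0
            have hwR : ‖w‖ ≤ R := (mem_ball_zero_iff.1 hw).le
            rw [hf w, ← enorm_eq_nnnorm, Real.enorm_eq_ofReal (hφ0 _ (mem_Ioi.2 hw'))]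
            exact ENNReal.ofReal_le_ofReal (hφa (mem_Ioi.2 hw') (mem_Ioi.2 hR0) hwR)
        _ ≤ _ := morrey_ball_bound n lam f 0 hR0
    have hφR : ENNReal.ofReal (φ R)
        ≤ (ENNReal.ofReal (R ^ ((n:ℝ))) * v)⁻¹ * (ENNReal.ofReal (R ^ ((n:ℝ) - lam)) * A) := by
      have hb0 : volume (Metric.ball (0:EuclideanSpace ℝ (Fin n)) R) ≠ 0 :=
        (measure_ball_pos _ _ hR0).ne'
      have hbt : volume (Metric.ball (0:EuclideanSpace ℝ (Fin n)) R) ≠ ⊤ := measure_ball_lt_top.ne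
      have heq : ENNReal.ofReal (φ R)
          = (volume (Metric.ball (0:EuclideanSpace ℝ (Fin n)) R))⁻¹ *
            (ENNReal.ofReal (φ R) * volume (Metric.ball (0:EuclideanSpace ℝ (Fin n)) R)) := by
        rw [mul_comm (ENNReal.ofReal (φ R)) _, ← mul_assoc,
          ENNReal.inv_mul_cancel hb0 hbt, one_mul]
      calc ENNReal.ofReal (φ R)
          ≤ (volume (Metric.ball (0:EuclideanSpace ℝ (Fin n)) R))⁻¹ *
              (ENNReal.ofReal (R ^ ((n:ℝ) - lam)) * A) := by
            rw [heq]; exact mul_le_mul_right hB _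
        _ = _ := by rw [vol_ball (0:EuclideanSpace ℝ (Fin n)) hR0, ← hv]
    refine le_trans hT (le_trans hφR ?_)
    rw [aux_inv_mul hv0 hvt (by positivity) (by positivity)]
    gcongr ENNReal.ofReal ?_ * A
    have e0 : (R ^ ((n:ℝ)))⁻¹ * v.toReal⁻¹ * R ^ ((n:ℝ) - lam) = v.toReal⁻¹ * R ^ (-lam) := by
      rw [← Real.rpow_neg hR0.le, mul_comm (R ^ (-(n:ℝ))) v.toReal⁻¹, mul_assoc,
        ← Real.rpow_add hR0, show -(n:ℝ) + ((n:ℝ) - lam) = -lam by ring]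
    rw [e0]
    have e1 : R ^ (-lam) ≤ (24:ℝ) ^ ((n:ℝ)) * ‖y‖ ^ (-lam) := by
      rw [hR, Real.div_rpow hny.le (by norm_num), Real.rpow_neg (by norm_num : (0:ℝ) ≤ 2),
        div_eq_mul_inv, inv_inv, mul_comm]
      have h8 : (2:ℝ) ^ lam ≤ (24:ℝ) ^ ((n:ℝ)) :=
        le_trans (Real.rpow_le_rpow_of_exponent_le (by norm_num) (by linarith : lam ≤ (n:ℝ)))
          (Real.rpow_le_rpow (by norm_num) (by norm_num) (by positivity))
      exact mul_le_mul_of_nonneg_right h8 (by positivity)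
    calc v.toReal⁻¹ * R ^ (-lam) ≤ v.toReal⁻¹ * ((24:ℝ) ^ ((n:ℝ)) * ‖y‖ ^ (-lam)) :=
          mul_le_mul_of_nonneg_left e1 (by positivity)
      _ = (24:ℝ) ^ ((n:ℝ)) * v.toReal⁻¹ * ‖y‖ ^ (-lam) := by ring

lemma g_meas (n : ℕ) (lam : ℝ) :
    Measurable fun y : EuclideanSpace ℝ (Fin n) => ENNReal.ofReal (‖y‖ ^ (-lam)) :=
  by fun_prop

lemma rpow_ball_scaling (n : ℕ) (lam : ℝ) {R : ℝ} (hR : 0 < R) :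
    ∫⁻ y in Metric.ball (0:EuclideanSpace ℝ (Fin n)) R, ENNReal.ofReal (‖y‖ ^ (-lam))
      = ENNReal.ofReal (R ^ ((n:ℝ)) * R ^ (-lam)) *
        ∫⁻ y in Metric.ball (0:EuclideanSpace ℝ (Fin n)) 1, ENNReal.ofReal (‖y‖ ^ (-lam)) := by
  have hmapeq := Measure.map_addHaar_smul (volume : Measure (EuclideanSpace ℝ (Fin n))) hR.ne'
  have hmeasT : Measurable fun w : EuclideanSpace ℝ (Fin n) => R • w := measurable_id.const_smul R
  have hpre : (fun w : EuclideanSpace ℝ (Fin n) => R • w) ⁻¹' (Metric.ball 0 R)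
      = Metric.ball 0 1 := by
    ext w
    simp only [Set.mem_preimage, mem_ball_zero_iff, norm_smul, Real.norm_eq_abs,
      abs_of_pos hR]
    exact mul_lt_iff_lt_one_right hR
  have key : ∫⁻ y in Metric.ball (0:EuclideanSpace ℝ (Fin n)) R, ENNReal.ofReal (‖y‖ ^ (-lam))
        ∂(Measure.map (fun w : EuclideanSpace ℝ (Fin n) => R • w) volume)
      = ∫⁻ w in Metric.ball (0:EuclideanSpace ℝ (Fin n)) 1,
          ENNReal.ofReal (‖R • w‖ ^ (-lam)) := by
    rw [setLIntegral_map measurableSet_ball (g_meas n lam) hmeasT, hpre]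
  rw [hmapeq, Measure.restrict_smul, lintegral_smul_measure] at key
  have hRn : (0:ℝ) < R ^ Module.finrank ℝ (EuclideanSpace ℝ (Fin n)) := by positivity
  have habs : |((R:ℝ) ^ Module.finrank ℝ (EuclideanSpace ℝ (Fin n)))⁻¹|
      = (R ^ Module.finrank ℝ (EuclideanSpace ℝ (Fin n)))⁻¹ := abs_of_pos (by positivity)
  rw [habs] at key
  have hrhs : ∫⁻ w in Metric.ball (0:EuclideanSpace ℝ (Fin n)) 1,
        ENNReal.ofReal (‖R • w‖ ^ (-lam))
      = ENNReal.ofReal (R ^ (-lam)) *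
        ∫⁻ w in Metric.ball (0:EuclideanSpace ℝ (Fin n)) 1, ENNReal.ofReal (‖w‖ ^ (-lam)) := by
    rw [← lintegral_const_mul' _ _ ENNReal.ofReal_ne_top]
    congr 1
    ext w
    rw [norm_smul, Real.norm_eq_abs, abs_of_pos hR, Real.mul_rpow hR.le (norm_nonneg w),
      ENNReal.ofReal_mul (by positivity)]
  rw [hrhs] at key
  have hc0 : ENNReal.ofReal ((R ^ Module.finrank ℝ (EuclideanSpace ℝ (Fin n)))⁻¹) ≠ 0 :=
    (ENNReal.ofReal_pos.2 (by positivity)).ne'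
  have hct : ENNReal.ofReal ((R ^ Module.finrank ℝ (EuclideanSpace ℝ (Fin n)))⁻¹) ≠ ⊤ :=
    ENNReal.ofReal_ne_top
  have hXeq : ∫⁻ y in Metric.ball (0:EuclideanSpace ℝ (Fin n)) R, ENNReal.ofReal (‖y‖ ^ (-lam))
      = (ENNReal.ofReal ((R ^ Module.finrank ℝ (EuclideanSpace ℝ (Fin n)))⁻¹))⁻¹ *
        (ENNReal.ofReal (R ^ (-lam)) *
          ∫⁻ w in Metric.ball (0:EuclideanSpace ℝ (Fin n)) 1, ENNReal.ofReal (‖w‖ ^ (-lam))) := by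
    rw [← key, smul_eq_mul, ← mul_assoc, ENNReal.inv_mul_cancel hc0 hct, one_mul]
  rw [hXeq, ← ENNReal.ofReal_inv_of_pos (by positivity), inv_inv, ← mul_assoc,
    ← ENNReal.ofReal_mul (by positivity), finrank_euclideanSpace_fin,
    ← Real.rpow_natCast R n]

lemma J_finite (n : ℕ) (hn : 1 ≤ n) (lam : ℝ) (hlam0 : 0 < lam) (hlamn : lam < n) :
    (∫⁻ y in Metric.ball (0:EuclideanSpace ℝ (Fin n)) 1, ENNReal.ofReal (‖y‖ ^ (-lam))) < ⊤ := by
  haveI : Nonempty (Fin n) := ⟨⟨0, hn⟩⟩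
  set v : ℝ≥0∞ := volume (Metric.ball (0:EuclideanSpace ℝ (Fin n)) 1) with hv
  have hvt : v ≠ ⊤ := measure_ball_lt_top.ne
  set q : ℝ := (1/2:ℝ) ^ ((n:ℝ) - lam) with hq
  have hq0 : 0 ≤ q := by positivity
  have hq1 : q < 1 := Real.rpow_lt_one (by norm_num) (by norm_num) (by linarith)
  set sh : ℕ → Set (EuclideanSpace ℝ (Fin n)) := fun k =>
    Metric.ball 0 ((1/2:ℝ)^k) \ Metric.ball 0 ((1/2:ℝ)^(k+1)) with hsh
  have hcover : Metric.ball (0:EuclideanSpace ℝ (Fin n)) 1 ⊆ {0} ∪ ⋃ k, sh k := by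
    intro w hw
    by_cases hw0 : w = 0
    · exact Or.inl (by simp [hw0])
    · have hw' : 0 < ‖w‖ := norm_pos_iff.2 hw0
      have hex : ∃ k : ℕ, (1/2:ℝ)^(k+1) ≤ ‖w‖ := by
        obtain ⟨m, hm⟩ := exists_pow_lt_of_lt_one hw' (by norm_num : (1/2:ℝ) < 1)
        exact ⟨m, le_trans (pow_le_pow_of_le_one (by norm_num) (by norm_num) (Nat.le_succ m)) hm.le⟩
      classical
      set k := Nat.find hex with hk
      have hk1 : (1/2:ℝ)^(k+1) ≤ ‖w‖ := Nat.find_spec hex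
      have hk2 : ‖w‖ < (1/2:ℝ)^k := by
        rcases Nat.eq_zero_or_pos k with h0 | hpos
        · rw [h0, pow_zero]; exact mem_ball_zero_iff.1 hw
        · have := Nat.find_min hex (show k - 1 < k by omega)
          push_neg at this
          have : ‖w‖ < (1/2:ℝ) ^ (k - 1 + 1) := this
          rwa [Nat.sub_add_cancel hpos] at this
      refine Or.inr (Set.mem_iUnion.2 ⟨k, ?_⟩)
      exact ⟨mem_ball_zero_iff.2 hk2, fun h => absurd (mem_ball_zero_iff.1 h) (not_lt.2 hk1)⟩
  have hshell : ∀ k : ℕ, ∫⁻ y in sh k, ENNReal.ofReal (‖y‖ ^ (-lam))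
      ≤ (ENNReal.ofReal ((2:ℝ) ^ lam) * v) * (ENNReal.ofReal q) ^ k := by
    intro k
    have hmeas : MeasurableSet (sh k) := measurableSet_ball.diff measurableSet_ball
    have hbd : ∀ y ∈ sh k, ENNReal.ofReal (‖y‖ ^ (-lam))
        ≤ ENNReal.ofReal (((1/2:ℝ)^(k+1)) ^ (-lam)) := by
      intro y hy
      have h1 : (1/2:ℝ)^(k+1) ≤ ‖y‖ := not_lt.1 (fun h => hy.2 (mem_ball_zero_iff.2 h))
      exact ENNReal.ofReal_le_ofReal
        (Real.rpow_le_rpow_of_nonpos (by positivity) h1 (neg_nonpos.2 hlam0.le))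
    calc ∫⁻ y in sh k, ENNReal.ofReal (‖y‖ ^ (-lam))
        ≤ ∫⁻ _ in sh k, ENNReal.ofReal (((1/2:ℝ)^(k+1)) ^ (-lam)) :=
          lintegral_mono_ae (ae_restrict_of_forall_mem hmeas hbd)
      _ = ENNReal.ofReal (((1/2:ℝ)^(k+1)) ^ (-lam)) * volume (sh k) := setLIntegral_const _ _
      _ ≤ ENNReal.ofReal (((1/2:ℝ)^(k+1)) ^ (-lam)) *
            volume (Metric.ball (0:EuclideanSpace ℝ (Fin n)) ((1/2:ℝ)^k)) := by
          gcongr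
          exact Set.diff_subset
      _ = ENNReal.ofReal (((1/2:ℝ)^(k+1)) ^ (-lam) * ((1/2:ℝ)^k) ^ ((n:ℝ))) * v := by
          rw [vol_ball _ (by positivity), ← hv, ← mul_assoc,
            ← ENNReal.ofReal_mul (by positivity)]
      _ = (ENNReal.ofReal ((2:ℝ) ^ lam) * v) * (ENNReal.ofReal q) ^ k := by
          have e1 : ((1/2:ℝ)^(k+1)) ^ (-lam) * ((1/2:ℝ)^k) ^ ((n:ℝ))
              = (2:ℝ) ^ lam * q ^ k := by
            have t0 : (0:ℝ) < (1/2:ℝ)^k := by positivity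
            have e2 : ((1/2:ℝ)^(k+1) : ℝ) = (1/2:ℝ)^k / 2 := by
              rw [pow_succ]; ring
            have e3 : (q:ℝ) ^ k = ((1/2:ℝ)^k) ^ ((n:ℝ) - lam) := by
              rw [hq, ← Real.rpow_natCast ((1/2:ℝ) ^ ((n:ℝ) - lam)) k,
                ← Real.rpow_natCast ((1/2:ℝ)) k, ← Real.rpow_mul (by norm_num),
                ← Real.rpow_mul (by norm_num), mul_comm]
            rw [e2, Real.div_rpow t0.le (by norm_num), Real.rpow_neg (by norm_num : (0:ℝ) ≤ 2),
              div_eq_mul_inv, inv_inv, e3,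
              show ((1/2:ℝ)^k) ^ ((n:ℝ) - lam)
                  = ((1/2:ℝ)^k) ^ (-lam) * ((1/2:ℝ)^k) ^ ((n:ℝ)) by
                rw [← Real.rpow_add t0]; ring_nf]
            ring
          rw [e1, ENNReal.ofReal_mul (by positivity), ← ENNReal.ofReal_pow hq0]
          ring
  have hJle : (∫⁻ y in Metric.ball (0:EuclideanSpace ℝ (Fin n)) 1, ENNReal.ofReal (‖y‖ ^ (-lam)))
      ≤ ∑' k : ℕ, (ENNReal.ofReal ((2:ℝ) ^ lam) * v) * (ENNReal.ofReal q) ^ k := by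
    calc (∫⁻ y in Metric.ball (0:EuclideanSpace ℝ (Fin n)) 1, ENNReal.ofReal (‖y‖ ^ (-lam)))
        ≤ ∫⁻ y in ({0} ∪ ⋃ k, sh k : Set (EuclideanSpace ℝ (Fin n))),
            ENNReal.ofReal (‖y‖ ^ (-lam)) := lintegral_mono_set hcover
      _ ≤ (∫⁻ y in ({0} : Set (EuclideanSpace ℝ (Fin n))), ENNReal.ofReal (‖y‖ ^ (-lam)))
            + ∫⁻ y in (⋃ k, sh k), ENNReal.ofReal (‖y‖ ^ (-lam)) := lintegral_union_le _ _ _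
      _ ≤ 0 + ∑' k : ℕ, ∫⁻ y in sh k, ENNReal.ofReal (‖y‖ ^ (-lam)) := by
          refine add_le_add (le_of_eq (setLIntegral_measure_zero _ _ (measure_singleton 0)))
            (lintegral_iUnion_le _ _)
      _ ≤ 0 + ∑' k : ℕ, (ENNReal.ofReal ((2:ℝ) ^ lam) * v) * (ENNReal.ofReal q) ^ k := by
          exact add_le_add le_rfl (ENNReal.tsum_le_tsum hshell)
      _ = _ := zero_add _
  refine lt_of_le_of_lt hJle ?_
  rw [ENNReal.tsum_mul_left, ENNReal.tsum_geometric]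
  have hr1 : ENNReal.ofReal q < 1 := by
    rw [← ENNReal.ofReal_one]
    exact ENNReal.ofReal_lt_ofReal_iff_of_nonneg hq0 |>.2 hq1
  refine ENNReal.mul_lt_top (ENNReal.mul_lt_top ENNReal.ofReal_lt_top hvt.lt_top) ?_
  exact ENNReal.inv_lt_top.2 (tsub_pos_iff_lt.mpr hr1)

lemma rpow_ball_integral (n : ℕ) (hn : 1 ≤ n) (lam : ℝ) (hlam0 : 0 < lam) (hlamn : lam < n)
    (x : EuclideanSpace ℝ (Fin n)) {r : ℝ} (hr : 0 < r) :
    ∫⁻ y in Metric.ball x r, ENNReal.ofReal (‖y‖ ^ (-lam))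
      ≤ ENNReal.ofReal (((3:ℝ) ^ ((n:ℝ)) *
          (∫⁻ y in Metric.ball (0:EuclideanSpace ℝ (Fin n)) 1,
            ENNReal.ofReal (‖y‖ ^ (-lam))).toReal
          + (volume (Metric.ball (0:EuclideanSpace ℝ (Fin n)) 1)).toReal)
          * r ^ ((n:ℝ) - lam)) := by
  haveI : Nonempty (Fin n) := ⟨⟨0, hn⟩⟩
  set J : ℝ≥0∞ := ∫⁻ y in Metric.ball (0:EuclideanSpace ℝ (Fin n)) 1,
    ENNReal.ofReal (‖y‖ ^ (-lam)) with hJ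
  have hJt : J ≠ ⊤ := (J_finite n hn lam hlam0 hlamn).ne
  set v : ℝ≥0∞ := volume (Metric.ball (0:EuclideanSpace ℝ (Fin n)) 1) with hv
  have hvt : v ≠ ⊤ := measure_ball_lt_top.ne
  have hJR : 0 ≤ J.toReal := ENNReal.toReal_nonneg
  have hvR : 0 ≤ v.toReal := ENNReal.toReal_nonneg
  by_cases hx : ‖x‖ ≤ 2*r
  · have hsub : Metric.ball x r ⊆ Metric.ball (0:EuclideanSpace ℝ (Fin n)) (3*r) := by
      intro w hw
      have h1 : dist w x < r := mem_ball.mp hw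
      have h2 : ‖w‖ ≤ dist w x + ‖x‖ := by simpa [dist_zero_right] using dist_triangle w x 0
      exact mem_ball_zero_iff.mpr (by linarith)
    calc ∫⁻ y in Metric.ball x r, ENNReal.ofReal (‖y‖ ^ (-lam))
        ≤ ∫⁻ y in Metric.ball (0:EuclideanSpace ℝ (Fin n)) (3*r),
            ENNReal.ofReal (‖y‖ ^ (-lam)) := lintegral_mono_set hsub
      _ = ENNReal.ofReal ((3*r) ^ ((n:ℝ)) * (3*r) ^ (-lam)) * J :=
          rpow_ball_scaling n lam (by linarith)
      _ ≤ _ := by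
          conv_lhs => rw [show J = ENNReal.ofReal J.toReal from (ENNReal.ofReal_toReal hJt).symm,
            ← ENNReal.ofReal_mul (by positivity)]
          refine ENNReal.ofReal_le_ofReal ?_
          have e1 : (3*r:ℝ) ^ ((n:ℝ)) * (3*r) ^ (-lam) = (3*r) ^ ((n:ℝ) - lam) := by
            rw [← Real.rpow_add (by linarith)]; ring_nf
          have e2 : ((3:ℝ)*r) ^ ((n:ℝ) - lam) = 3 ^ ((n:ℝ) - lam) * r ^ ((n:ℝ) - lam) :=
            Real.mul_rpow (by norm_num) hr.le
          have e3 : (3:ℝ) ^ ((n:ℝ) - lam) ≤ 3 ^ ((n:ℝ)) :=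
            Real.rpow_le_rpow_of_exponent_le (by norm_num) (by linarith)
          rw [e1, e2]
          have h4 : (0:ℝ) ≤ r ^ ((n:ℝ) - lam) := by positivity
          nlinarith [mul_le_mul_of_nonneg_right (mul_le_mul_of_nonneg_right e3 h4) hJR,
            mul_nonneg hvR h4]
  · push_neg at hx
    have hbd : ∀ y ∈ Metric.ball x r, ENNReal.ofReal (‖y‖ ^ (-lam))
        ≤ ENNReal.ofReal (r ^ (-lam)) := by
      intro y hy
      have h1 : dist y x < r := mem_ball.mp hy
      have h3 : ‖x‖ - ‖y‖ ≤ dist x y := by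
        have := abs_norm_sub_norm_le x y
        rw [← dist_eq_norm] at this
        exact (abs_le.1 this).2
      rw [dist_comm] at h3
      have h4 : r ≤ ‖y‖ := by linarith
      exact ENNReal.ofReal_le_ofReal
        (Real.rpow_le_rpow_of_nonpos hr h4 (neg_nonpos.2 hlam0.le))
    calc ∫⁻ y in Metric.ball x r, ENNReal.ofReal (‖y‖ ^ (-lam))
        ≤ ∫⁻ _ in Metric.ball x r, ENNReal.ofReal (r ^ (-lam)) :=
          lintegral_mono_ae (ae_restrict_of_forall_mem measurableSet_ball hbd)
      _ = ENNReal.ofReal (r ^ (-lam)) * volume (Metric.ball x r) := setLIntegral_const _ _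
      _ = ENNReal.ofReal (r ^ (-lam) * (r ^ ((n:ℝ)) * v.toReal)) := by
          rw [vol_ball x hr, ← hv, show v = ENNReal.ofReal v.toReal
              from (ENNReal.ofReal_toReal hvt).symm,
            ← ENNReal.ofReal_mul (by positivity), ← ENNReal.ofReal_mul (by positivity),
            ENNReal.toReal_ofReal hvR]
      _ ≤ _ := by
          refine ENNReal.ofReal_le_ofReal ?_
          have e1 : r ^ (-lam) * (r ^ ((n:ℝ)) * v.toReal) = v.toReal * r ^ ((n:ℝ) - lam) := by
            rw [show ((n:ℝ) - lam) = -lam + (n:ℝ) by ring, Real.rpow_add hr]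
            ring
          rw [e1]
          have h4 : (0:ℝ) ≤ r ^ ((n:ℝ) - lam) := by positivity
          nlinarith [mul_nonneg (mul_nonneg (by positivity : (0:ℝ) ≤ (3:ℝ) ^ ((n:ℝ))) hJR) h4]

/-- main theorem: For `n ≥ 1`, `0 < λ < n`, there is `C > 0` (depending only
on `n, λ`) such that `‖Mf‖_{M_{1,λ}} ≤ C ‖f‖_{M_{1,λ}}` for all radial decreasing
`f(x) = φ(|x|)` with `φ ≥ 0` nonincreasing on `(0,∞)`. -/
theorem statement6 (n : ℕ) (hn : 1 ≤ n) (lam : ℝ) (hlam0 : 0 < lam) (hlamn : lam < n) :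
    ∃ C : ℝ, 0 < C ∧ ∀ (f : EuclideanSpace ℝ (Fin n) → ℝ) (φ : ℝ → ℝ),
      (∀ ρ ∈ Set.Ioi (0:ℝ), 0 ≤ φ ρ) → AntitoneOn φ (Set.Ioi (0:ℝ)) →
      (∀ x, f x = φ ‖x‖) →
      morreyNormE n lam (maximalFn n f) ≤ ENNReal.ofReal C * morreyNorm n lam f := by
  haveI : Nonempty (Fin n) := ⟨⟨0, hn⟩⟩
  set J : ℝ≥0∞ := ∫⁻ y in Metric.ball (0:EuclideanSpace ℝ (Fin n)) 1,
    ENNReal.ofReal (‖y‖ ^ (-lam)) with hJ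
  set v : ℝ≥0∞ := volume (Metric.ball (0:EuclideanSpace ℝ (Fin n)) 1) with hv
  have hv0 : v ≠ 0 := (measure_ball_pos _ _ one_pos).ne'
  have hvt : v ≠ ⊤ := measure_ball_lt_top.ne
  have hvR : 0 < v.toReal := ENNReal.toReal_pos hv0 hvt
  set K : ℝ := (24:ℝ) ^ ((n:ℝ)) * v.toReal⁻¹ with hK
  set c2 : ℝ := (3:ℝ) ^ ((n:ℝ)) * J.toReal + v.toReal with hc2
  have hK0 : 0 < K := by positivity
  have hc20 : 0 < c2 := by positivity
  refine ⟨K * c2, by positivity, fun f φ hφ0 hφa hf => ?_⟩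
  set A := morreyNorm n lam f with hA
  rcases eq_top_or_lt_top A with hAt | hAlt
  · rw [hAt, ENNReal.mul_top (ENNReal.ofReal_pos.2 (by positivity)).ne']
    exact le_top
  have hAne : A ≠ ⊤ := hAlt.ne
  have h0ae : ∀ᵐ (w : EuclideanSpace ℝ (Fin n)) ∂(volume : Measure (EuclideanSpace ℝ (Fin n))),
      w ≠ 0 := by
    refine ae_iff.2 ?_
    simp only [not_not, Set.setOf_eq_eq_singleton]
    exact measure_singleton 0
  refine iSup_le fun x => iSup_le fun r => iSup_le fun hr => ?_
  have hKA : ENNReal.ofReal K * A ≠ ⊤ := ENNReal.mul_ne_top ENNReal.ofReal_ne_top hAne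
  have step1 : ∫⁻ y in Metric.ball x r, maximalFn n f y
      ≤ (ENNReal.ofReal K * A) * ∫⁻ y in Metric.ball x r, ENNReal.ofReal (‖y‖ ^ (-lam)) := by
    rw [← lintegral_const_mul' _ _ hKA]
    refine lintegral_mono_ae ?_
    filter_upwards [ae_restrict_of_ae h0ae] with y hy0
    calc maximalFn n f y ≤ ENNReal.ofReal (K * ‖y‖ ^ (-lam)) * A := by
          have := maximal_ptwise n hn lam hlam0 hlamn f φ hφ0 hφa hf hy0
          rw [hK]
          exact this
      _ = ENNReal.ofReal K * A * ENNReal.ofReal (‖y‖ ^ (-lam)) := by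
          rw [ENNReal.ofReal_mul hK0.le]; ring
  have step3 : ∫⁻ y in Metric.ball x r, ENNReal.ofReal (‖y‖ ^ (-lam))
      ≤ ENNReal.ofReal (c2 * r ^ ((n:ℝ) - lam)) := by
    have := rpow_ball_integral n hn lam hlam0 hlamn x hr
    rw [hc2]
    exact this
  have hcancel : ENNReal.ofReal (r ^ (lam - (n:ℝ))) * ENNReal.ofReal (r ^ ((n:ℝ) - lam)) = 1 := by
    rw [← ENNReal.ofReal_mul (by positivity), ← Real.rpow_add hr,
      show (lam - (n:ℝ)) + ((n:ℝ) - lam) = 0 by ring, Real.rpow_zero, ENNReal.ofReal_one]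
  calc ENNReal.ofReal (r ^ (lam - (n:ℝ))) * ∫⁻ y in Metric.ball x r, maximalFn n f y
      ≤ ENNReal.ofReal (r ^ (lam - (n:ℝ))) *
          ((ENNReal.ofReal K * A) * ENNReal.ofReal (c2 * r ^ ((n:ℝ) - lam))) :=
        mul_le_mul_right (step1.trans (mul_le_mul_right step3 _)) _
    _ = ENNReal.ofReal (K * c2) * A := by
        rw [ENNReal.ofReal_mul (by positivity : (0:ℝ) ≤ c2),
          ENNReal.ofReal_mul hK0.le]
        calc ENNReal.ofReal (r ^ (lam - (n:ℝ))) *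
              ((ENNReal.ofReal K * A) * (ENNReal.ofReal c2 * ENNReal.ofReal (r ^ ((n:ℝ) - lam))))
            = (ENNReal.ofReal K * ENNReal.ofReal c2) *
              (ENNReal.ofReal (r ^ (lam - (n:ℝ))) * ENNReal.ofReal (r ^ ((n:ℝ) - lam))) * A := by
              ring
          _ = ENNReal.ofReal K * ENNReal.ofReal c2 * A := by rw [hcancel, mul_one]
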